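/- Let g = (a,b,c) ∈ ℝ³ and let L_g : ℝ³ → ℝ³ be given by L_g(x,y,z) = (a + e^c·x, b + e^{-c}·y, c + z). Identify the cotangent bundle T*ℝ³ with ℝ³ × (ℝ³ → ℝ)* and let the cotangent lift of L_g send (q,p) to (L_g(q), p ∘ (D L_g(q))⁻¹), where D L_g(q) is the Fréchet derivative of L_g at q. Then the functions M_x(q,p) = e^{z}·p(e₁), M_y(q,p) = e^{-z}·p(e₂), M_z(q,p) = p(e₃) — where z is the third coordinate of q and e₁, e₂, e₃ is the standard basis of ℝ³ — are invariant under the cotangent lift of L_g: M_x(L_g(q), p ∘ (D L_g(q))⁻¹) = M_x(q,p), and likewise for M_y and M_z. -/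

import Mathlib

/-- The function `M_x(q,p) = e^z · p(e₁)`, where `z` is the third coordinate of `q`. -/
noncomputable def Mx (q : ℝ × ℝ × ℝ) (p : (ℝ × ℝ × ℝ) →L[ℝ] ℝ) : ℝ :=
  Real.exp q.2.2 * p ((1 : ℝ), (0 : ℝ), (0 : ℝ))

/-- The function `M_y(q,p) = e^{-z} · p(e₂)`, where `z` is the third coordinate of `q`. -/
noncomputable def My (q : ℝ × ℝ × ℝ) (p : (ℝ × ℝ × ℝ) →L[ℝ] ℝ) : ℝ :=
  Real.exp (-q.2.2) * p ((0 : ℝ), (1 : ℝ), (0 : ℝ))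

/-- The function `M_z(q,p) = p(e₃)`. -/
noncomputable def Mz (_q : ℝ × ℝ × ℝ) (p : (ℝ × ℝ × ℝ) →L[ℝ] ℝ) : ℝ :=
  p ((0 : ℝ), (0 : ℝ), (1 : ℝ))

noncomputable def solA (c : ℝ) : (ℝ × ℝ × ℝ) →L[ℝ] (ℝ × ℝ × ℝ) :=
  (Real.exp c • ContinuousLinearMap.fst ℝ ℝ (ℝ × ℝ)).prod
    (((Real.exp (-c) • ContinuousLinearMap.fst ℝ ℝ ℝ).prod
      (ContinuousLinearMap.snd ℝ ℝ ℝ)).comp (ContinuousLinearMap.snd ℝ ℝ (ℝ × ℝ)))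

lemma solA_apply (c : ℝ) (v : ℝ × ℝ × ℝ) :
    solA c v = (Real.exp c * v.1, Real.exp (-c) * v.2.1, v.2.2) := rfl

lemma sol_fderiv (a b c : ℝ) (q : ℝ × ℝ × ℝ) :
    fderiv ℝ (fun v : ℝ × ℝ × ℝ =>
      ((a + Real.exp c * v.1, b + Real.exp (-c) * v.2.1, c + v.2.2) : ℝ × ℝ × ℝ)) q
      = solA c := by
  have h : HasFDerivAt (fun v : ℝ × ℝ × ℝ =>
      ((a + Real.exp c * v.1, b + Real.exp (-c) * v.2.1, c + v.2.2) : ℝ × ℝ × ℝ))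
      (solA c) q := by
    have := ((solA c).hasFDerivAt (x := q)).const_add ((a, b, c) : ℝ × ℝ × ℝ)
    convert this using 2 with v <;> rfl
  exact h.fderiv

/-- The functions `M_x(q,p) = e^z·p(e₁)`, `M_y(q,p) = e^{-z}·p(e₂)`, `M_z(q,p) = p(e₃)`
on the cotangent bundle `T*ℝ³ = ℝ³ × (ℝ³ →L[ℝ] ℝ)` are invariant under the cotangent
lift `(q,p) ↦ (L_g q, p ∘ (D L_g(q))⁻¹)` of the Sol left translation
`L_g(x,y,z) = (a + e^c·x, b + e^{-c}·y, c + z)`, where `B` denotes the two-sided inverse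
of the Fréchet derivative `D L_g(q) = fderiv ℝ L_g q`. -/
theorem sol_momenta_left_invariant (a b c : ℝ)
    (L : ℝ × ℝ × ℝ → ℝ × ℝ × ℝ)
    (hL : L = fun v : ℝ × ℝ × ℝ =>
      ((a + Real.exp c * v.1, b + Real.exp (-c) * v.2.1, c + v.2.2) : ℝ × ℝ × ℝ))
    (q : ℝ × ℝ × ℝ) (p : (ℝ × ℝ × ℝ) →L[ℝ] ℝ)
    (B : (ℝ × ℝ × ℝ) →L[ℝ] (ℝ × ℝ × ℝ))
    (hB₁ : (fderiv ℝ L q).comp B = ContinuousLinearMap.id ℝ (ℝ × ℝ × ℝ))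
    (hB₂ : B.comp (fderiv ℝ L q) = ContinuousLinearMap.id ℝ (ℝ × ℝ × ℝ)) :
    Mx (L q) (p.comp B) = Mx q p ∧
    My (L q) (p.comp B) = My q p ∧
    Mz (L q) (p.comp B) = Mz q p := by
  subst hL
  rw [sol_fderiv a b c q] at hB₂
  have hBA : ∀ w, B (solA c w) = w := fun w => congrArg (fun f => f w) hB₂
  have h1 : B ((1:ℝ), (0:ℝ), (0:ℝ)) = (Real.exp (-c), 0, 0) := by
    have := hBA (Real.exp (-c), 0, 0)
    rw [solA_apply] at this
    simpa [← Real.exp_add] using this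
  have h2 : B ((0:ℝ), (1:ℝ), (0:ℝ)) = (0, Real.exp c, 0) := by
    have := hBA (0, Real.exp c, 0)
    rw [solA_apply] at this
    simpa [← Real.exp_add] using this
  have h3 : B ((0:ℝ), (0:ℝ), (1:ℝ)) = (0, 0, 1) := by
    have := hBA (0, 0, 1)
    rw [solA_apply] at this
    simpa using this
  refine ⟨?_, ?_, ?_⟩
  · show Real.exp (c + q.2.2) * p (B (1,0,0)) = Real.exp q.2.2 * p (1,0,0)
    rw [h1]
    have e1 : ((Real.exp (-c), 0, 0) : ℝ × ℝ × ℝ) = Real.exp (-c) • ((1:ℝ), (0:ℝ), (0:ℝ)) := by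
      simp [Prod.smul_mk]
    rw [e1, map_smul, smul_eq_mul, ← mul_assoc, ← Real.exp_add]
    ring_nf
  · show Real.exp (-(c + q.2.2)) * p (B (0,1,0)) = Real.exp (-q.2.2) * p (0,1,0)
    rw [h2]
    have e2 : ((0, Real.exp c, 0) : ℝ × ℝ × ℝ) = Real.exp c • ((0:ℝ), (1:ℝ), (0:ℝ)) := by
      simp [Prod.smul_mk]
    rw [e2, map_smul, smul_eq_mul, ← mul_assoc, ← Real.exp_add]
    ring_nf
  · show p (B (0,0,1)) = p (0,0,1)
    rw [h3]
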